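/- Let x, y ∈ (0,1) with x < y, z = (x+y)/2, and n ≥ 1. Define D(k) = (1/2)·C(2n,k)·(x^k(1−x)^{2n−k} + y^k(1−y)^{2n−k}) − C(2n,k)·z^k(1−z)^{2n−k}. Then there exist real numbers 0 < t₁ < t₂ < 2n such that D(k) > 0 for integers 0 ≤ k < t₁, D(k) < 0 for integers t₁ < k < t₂, and D(k) > 0 for integers t₂ < k ≤ 2n. -/

import Mathlib

open Real Finset

private lemma exp_three (β : ℝ) (hβ : β ≠ 0) {p q lam mu : ℝ} (hpq : p ≠ q)
    (hl : 0 < lam) (hm : 0 < mu) (hlm : lam + mu = 1) :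
    Real.exp ((lam * p + mu * q) * β) < lam * Real.exp (p * β) + mu * Real.exp (q * β) := by
  have hne : p * β ≠ q * β := fun h => hpq (mul_right_cancel₀ hβ h)
  have h := strictConvexOn_exp.2 (Set.mem_univ (p * β)) (Set.mem_univ (q * β)) hne hl hm hlm
  simp only [smul_eq_mul] at h
  have e : (lam * p + mu * q) * β = lam * (p * β) + mu * (q * β) := by ring
  rw [e]
  exact h

private lemma pow_avg_lt (m : ℕ) (hm : m ≠ 0) (hme : Even m) {A B : ℝ} (hAB : A ≠ B) :
    2 * ((A + B) / 2) ^ m < A ^ m + B ^ m := by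
  have h := (Even.strictConvexOn_pow hme hm).2 (Set.mem_univ A) (Set.mem_univ B) hAB
    (by norm_num : (0:ℝ) < 1/2) (by norm_num : (0:ℝ) < 1/2) (by norm_num)
  simp only [smul_eq_mul] at h
  have e : (1/2 : ℝ) * A + (1/2 : ℝ) * B = (A + B) / 2 := by ring
  rw [e] at h
  linarith

private lemma mid_lt {H : ℝ → ℝ}
    (SC : ∀ p q lam mu : ℝ, p ≠ q → 0 < lam → 0 < mu → lam + mu = 1 →
      H (lam * p + mu * q) < lam * H p + mu * H q)
    {t s u : ℝ} (hts : t < s) (hsu : s < u) (ht : H t ≤ 1) (hu : H u ≤ 1) : H s < 1 := by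
  have hd : (0:ℝ) < u - t := by linarith
  have hl : 0 < (u - s) / (u - t) := div_pos (by linarith) hd
  have hm : 0 < (s - t) / (u - t) := div_pos (by linarith) hd
  have hlm : (u - s)/(u - t) + (s - t)/(u - t) = 1 := by field_simp; ring
  have hs : (u - s)/(u - t) * t + (s - t)/(u - t) * u = s := by field_simp; ring
  have h := SC t u _ _ (ne_of_lt (hts.trans hsu)) hl hm hlm
  rw [hs] at h
  nlinarith [mul_le_mul_of_nonneg_left ht hl.le, mul_le_mul_of_nonneg_left hu hm.le]

private lemma left_gt {H : ℝ → ℝ}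
    (SC : ∀ p q lam mu : ℝ, p ≠ q → 0 < lam → 0 < mu → lam + mu = 1 →
      H (lam * p + mu * q) < lam * H p + mu * H q)
    {t s u : ℝ} (hts : t < s) (hsu : s < u) (hs1 : 1 ≤ H s) (hu : H u < 1) : 1 < H t := by
  have hd : (0:ℝ) < u - t := by linarith
  have hl : 0 < (u - s) / (u - t) := div_pos (by linarith) hd
  have hm : 0 < (s - t) / (u - t) := div_pos (by linarith) hd
  have hlm : (u - s)/(u - t) + (s - t)/(u - t) = 1 := by field_simp; ring
  have hs : (u - s)/(u - t) * t + (s - t)/(u - t) * u = s := by field_simp; ring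
  have h := SC t u _ _ (ne_of_lt (hts.trans hsu)) hl hm hlm
  rw [hs] at h
  nlinarith [mul_lt_mul_of_pos_left hu hm]

private lemma right_gt {H : ℝ → ℝ}
    (SC : ∀ p q lam mu : ℝ, p ≠ q → 0 < lam → 0 < mu → lam + mu = 1 →
      H (lam * p + mu * q) < lam * H p + mu * H q)
    {s u t : ℝ} (hsu : s < u) (hut : u < t) (hs : H s < 1) (hu1 : 1 ≤ H u) : 1 < H t := by
  have hd : (0:ℝ) < t - s := by linarith
  have hl : 0 < (t - u) / (t - s) := div_pos (by linarith) hd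
  have hm : 0 < (u - s) / (t - s) := div_pos (by linarith) hd
  have hlm : (t - u)/(t - s) + (u - s)/(t - s) = 1 := by field_simp; ring
  have hs' : (t - u)/(t - s) * s + (u - s)/(t - s) * t = u := by field_simp; ring
  have h := SC s t _ _ (ne_of_lt (hsu.trans hut)) hl hm hlm
  rw [hs'] at h
  nlinarith [mul_lt_mul_of_pos_left hs hl]

private lemma term_id {x z : ℝ} (hx0 : 0 < x) (hx1 : x < 1) (hz0 : 0 < z) (hz1 : z < 1) (k m : ℕ) :
    z ^ k * (1 - z) ^ m * (((1 - x) / (1 - z)) ^ (k + m) * (x * (1 - z) / (z * (1 - x))) ^ k)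
      = x ^ k * (1 - x) ^ m := by
  have h1 : (1:ℝ) - z ≠ 0 := by linarith
  have h2 : (1:ℝ) - x ≠ 0 := by linarith
  have h3 : z ≠ 0 := by linarith
  rw [div_pow, div_pow, mul_pow, mul_pow, pow_add]
  field_simp
  ring

set_option maxHeartbeats 1600000 in
/-- Sign pattern `+,−,+` of the difference of probability mass functions. -/
theorem pmf_difference_sign_pattern (n : ℕ) (hn : 1 ≤ n) (x y : ℝ)
    (hx : x ∈ Set.Ioo (0:ℝ) 1) (hy : y ∈ Set.Ioo (0:ℝ) 1) (hxy : x < y) :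
    ∃ t₁ t₂ : ℝ, 0 < t₁ ∧ t₁ < t₂ ∧ t₂ < 2 * n ∧
      (∀ k : ℕ, (k : ℝ) < t₁ →
        0 < (1 / 2) * ((2 * n).choose k : ℝ) *
              (x ^ k * (1 - x) ^ (2 * n - k) + y ^ k * (1 - y) ^ (2 * n - k))
            - ((2 * n).choose k : ℝ) * ((x + y) / 2) ^ k * (1 - (x + y) / 2) ^ (2 * n - k)) ∧
      (∀ k : ℕ, t₁ < (k : ℝ) → (k : ℝ) < t₂ →
        (1 / 2) * ((2 * n).choose k : ℝ) *
              (x ^ k * (1 - x) ^ (2 * n - k) + y ^ k * (1 - y) ^ (2 * n - k))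
            - ((2 * n).choose k : ℝ) * ((x + y) / 2) ^ k * (1 - (x + y) / 2) ^ (2 * n - k) < 0) ∧
      (∀ k : ℕ, t₂ < (k : ℝ) → k ≤ 2 * n →
        0 < (1 / 2) * ((2 * n).choose k : ℝ) *
              (x ^ k * (1 - x) ^ (2 * n - k) + y ^ k * (1 - y) ^ (2 * n - k))
            - ((2 * n).choose k : ℝ) * ((x + y) / 2) ^ k * (1 - (x + y) / 2) ^ (2 * n - k)) := by
  classical
  obtain ⟨hx0, hx1⟩ := hx
  obtain ⟨hy0, hy1⟩ := hy
  set z : ℝ := (x + y) / 2 with hzdef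
  set N : ℕ := 2 * n with hNdef
  have hz0 : 0 < z := by rw [hzdef]; linarith
  have hz1 : z < 1 := by rw [hzdef]; linarith
  have hxz : x < z := by rw [hzdef]; linarith
  have hzy : z < y := by rw [hzdef]; linarith
  have hN0 : N ≠ 0 := by omega
  have hNe : Even N := even_two_mul n
  have h1x : (0:ℝ) < 1 - x := by linarith
  have h1y : (0:ℝ) < 1 - y := by linarith
  have h1z : (0:ℝ) < 1 - z := by linarith
  have hrx0 : 0 < x * (1 - z) / (z * (1 - x)) := by positivity
  have hry0 : 0 < y * (1 - z) / (z * (1 - y)) := by positivity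
  have hrx1 : x * (1 - z) / (z * (1 - x)) < 1 := by
    rw [div_lt_one (by positivity)]; nlinarith
  have hry1 : 1 < y * (1 - z) / (z * (1 - y)) := by
    rw [lt_div_iff₀ (by positivity)]; nlinarith
  have hβ₁ : Real.log (x * (1 - z) / (z * (1 - x))) ≠ 0 :=
    ne_of_lt (Real.log_neg hrx0 hrx1)
  have hβ₂ : Real.log (y * (1 - z) / (z * (1 - y))) ≠ 0 :=
    ne_of_gt (Real.log_pos hry1)
  clear_value z N
  set E : ℕ → ℝ := fun k => 1 / 2 * ((N.choose k : ℝ)) *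
      (x ^ k * (1 - x) ^ (N - k) + y ^ k * (1 - y) ^ (N - k))
      - (N.choose k : ℝ) * z ^ k * (1 - z) ^ (N - k) with hE
  set H : ℝ → ℝ := fun t => 1 / 2 * ((1 - x) / (1 - z)) ^ N *
      Real.exp (t * Real.log (x * (1 - z) / (z * (1 - x)))) +
      1 / 2 * ((1 - y) / (1 - z)) ^ N *
      Real.exp (t * Real.log (y * (1 - z) / (z * (1 - y)))) with hH
  have hc1 : (0:ℝ) < 1 / 2 * ((1 - x) / (1 - z)) ^ N := by positivity
  have hc2 : (0:ℝ) < 1 / 2 * ((1 - y) / (1 - z)) ^ N := by positivity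
  -- strict convexity three-point property of H
  have SC : ∀ p q lam mu : ℝ, p ≠ q → 0 < lam → 0 < mu → lam + mu = 1 →
      H (lam * p + mu * q) < lam * H p + mu * H q := by
    intro p q lam mu hpq hl hm hlm
    simp only [hH]
    have h1 := exp_three _ hβ₁ hpq hl hm hlm
    have h2 := exp_three _ hβ₂ hpq hl hm hlm
    have h1' := mul_lt_mul_of_pos_left h1 hc1
    have h2' := mul_lt_mul_of_pos_left h2 hc2
    nlinarith [h1', h2']
  -- value of H at naturals
  have hHk : ∀ k : ℕ, H k = 1 / 2 * ((1 - x) / (1 - z)) ^ N *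
      (x * (1 - z) / (z * (1 - x))) ^ k +
      1 / 2 * ((1 - y) / (1 - z)) ^ N * (y * (1 - z) / (z * (1 - y))) ^ k := by
    intro k
    simp only [hH]
    rw [Real.exp_nat_mul, Real.exp_nat_mul, Real.exp_log hrx0, Real.exp_log hry0]
  -- key identity
  have hidentity : ∀ k, k ≤ N → E k =
      (N.choose k : ℝ) * (z ^ k * (1 - z) ^ (N - k)) * (H k - 1) := by
    intro k hk
    obtain ⟨m, hm⟩ := Nat.exists_eq_add_of_le hk
    have hNk : N - k = m := by omega
    rw [hHk k]
    simp only [hE]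
    rw [hNk, hm]
    have T1 := term_id hx0 hx1 hz0 hz1 k m
    have T2 := term_id hy0 hy1 hz0 hz1 k m
    linear_combination (-(((k+m).choose k : ℝ)) / 2) * T1 + (-(((k+m).choose k : ℝ)) / 2) * T2
  have hCpos : ∀ k, k ≤ N → (0:ℝ) < (N.choose k : ℝ) * (z ^ k * (1 - z) ^ (N - k)) :=
    fun k hk => mul_pos (Nat.cast_pos.2 (Nat.choose_pos hk)) (by positivity)
  have sign1 : ∀ k, k ≤ N → 1 < H k → 0 < E k := by
    intro k hk h
    rw [hidentity k hk]
    exact mul_pos (hCpos k hk) (by linarith)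
  have sign2 : ∀ k, k ≤ N → H k < 1 → E k < 0 := by
    intro k hk h
    rw [hidentity k hk]
    exact mul_neg_of_pos_of_neg (hCpos k hk) (by linarith)
  have sign3 : ∀ k, k ≤ N → 0 ≤ E k → 1 ≤ H k := by
    intro k hk h
    by_contra hc
    push_neg at hc
    linarith [sign2 k hk hc]
  have sign4 : ∀ k, k ≤ N → E k < 0 → H k < 1 := by
    intro k hk h
    by_contra hc
    push_neg at hc
    rcases eq_or_lt_of_le hc with he | hlt
    · rw [hidentity k hk, ← he] at h; simp at h
    · linarith [sign1 k hk hlt]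
  -- endpoint positivity
  have hD0 : 0 < E 0 := by
    have h := pow_avg_lt N hN0 hNe (show (1:ℝ) - x ≠ 1 - y by intro h; linarith)
    have e : ((1:ℝ) - x + (1 - y)) / 2 = 1 - z := by rw [hzdef]; ring
    rw [e] at h
    simp only [hE]
    norm_num
    linarith
  have hDN : 0 < E N := by
    have h := pow_avg_lt N hN0 hNe (ne_of_lt hxy)
    have e : (x + y) / 2 = z := by rw [hzdef]
    rw [e] at h
    simp only [hE, Nat.choose_self, Nat.sub_self, pow_zero]
    norm_num
    linarith
  -- sum of E is zero
  have hsum1 : ∀ p : ℝ, ∑ k ∈ Finset.range (N+1), (N.choose k : ℝ) * p ^ k * (1-p) ^ (N-k) = 1 := by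
    intro p
    have h := add_pow p (1-p) N
    rw [show p + (1-p) = (1:ℝ) by ring, one_pow] at h
    conv_rhs => rw [h]
    exact Finset.sum_congr rfl fun k _ => by ring
  have hsumE : ∑ k ∈ Finset.range (N+1), E k = 0 := by
    have : ∑ k ∈ Finset.range (N+1), E k =
        1/2 * (∑ k ∈ Finset.range (N+1), (N.choose k : ℝ) * x ^ k * (1-x) ^ (N-k)) +
        1/2 * (∑ k ∈ Finset.range (N+1), (N.choose k : ℝ) * y ^ k * (1-y) ^ (N-k)) -
        (∑ k ∈ Finset.range (N+1), (N.choose k : ℝ) * z ^ k * (1-z) ^ (N-k)) := by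
      rw [Finset.mul_sum, Finset.mul_sum, ← Finset.sum_add_distrib, ← Finset.sum_sub_distrib]
      exact Finset.sum_congr rfl fun k _ => by simp only [hE]; ring
    rw [this, hsum1 x, hsum1 y, hsum1 z]
    norm_num
  -- the negative set
  have hex : ∃ k ∈ Finset.range (N+1), E k < 0 := by
    by_contra hcon
    push_neg at hcon
    have hpos : 0 < ∑ k ∈ Finset.range (N+1), E k :=
      Finset.sum_pos' (fun i hi => hcon i hi) ⟨0, Finset.mem_range.2 (by omega), hD0⟩
    linarith [hsumE]
  set S : Finset ℕ := (Finset.range (N+1)).filter (fun k => E k < 0) with hS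
  have hne : S.Nonempty := by
    obtain ⟨k, hk1, hk2⟩ := hex
    exact ⟨k, Finset.mem_filter.2 ⟨hk1, hk2⟩⟩
  obtain ⟨a, hadef⟩ : ∃ a, a = S.min' hne := ⟨_, rfl⟩
  obtain ⟨b, hbdef⟩ : ∃ b, b = S.max' hne := ⟨_, rfl⟩
  have haS : a ∈ (Finset.range (N+1)).filter (fun k => E k < 0) := by
    rw [← hS, hadef]; exact S.min'_mem hne
  have hbS : b ∈ (Finset.range (N+1)).filter (fun k => E k < 0) := by
    rw [← hS, hbdef]; exact S.max'_mem hne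
  rw [Finset.mem_filter, Finset.mem_range] at haS hbS
  have hminle : ∀ k, k ≤ N → E k < 0 → a ≤ k := by
    intro k hk hneg
    rw [hadef]
    exact S.min'_le k (by rw [hS]; exact Finset.mem_filter.2 ⟨Finset.mem_range.2 (by omega), hneg⟩)
  have hmaxle : ∀ k, k ≤ N → E k < 0 → k ≤ b := by
    intro k hk hneg
    rw [hbdef]
    exact S.le_max' k (by rw [hS]; exact Finset.mem_filter.2 ⟨Finset.mem_range.2 (by omega), hneg⟩)
  have hEa : E a < 0 := haS.2
  have hEb : E b < 0 := hbS.2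
  have haN : a ≤ N := by omega
  have hbN : b ≤ N := by omega
  have hab : a ≤ b := hminle b hbN hEb
  have ha1 : 1 ≤ a := by
    rcases Nat.eq_zero_or_pos a with h | h
    · rw [h] at hEa; linarith
    · exact h
  have hbN' : b < N := by
    rcases eq_or_lt_of_le hbN with h | h
    · rw [h] at hEb; linarith
    · exact h
  have hEam : 0 ≤ E (a - 1) := by
    by_contra hc
    push_neg at hc
    have : a ≤ a - 1 := hminle (a-1) (by omega) hc
    omega
  have hEbp : 0 ≤ E (b + 1) := by
    by_contra hc
    push_neg at hc
    have : b + 1 ≤ b := hmaxle (b+1) (by omega) hc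
    omega
  have hHa : H a < 1 := sign4 a haN hEa
  have hHb : H b < 1 := sign4 b hbN hEb
  have hHam : 1 ≤ H ((a:ℝ) - 1) := by
    have h := sign3 (a-1) (by omega) hEam
    rwa [Nat.cast_sub ha1, Nat.cast_one] at h
  have hHbp : 1 ≤ H ((b:ℝ) + 1) := by
    have h := sign3 (b+1) (by omega) hEbp
    rwa [Nat.cast_add, Nat.cast_one] at h
  set t₁ : ℝ := if E (a - 1) = 0 then (a:ℝ) - 1 else (a:ℝ) - 1/2 with ht1
  set t₂ : ℝ := if E (b + 1) = 0 then (b:ℝ) + 1 else (b:ℝ) + 1/2 with ht2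
  have haR : (1:ℝ) ≤ (a:ℝ) := by exact_mod_cast ha1
  have habR : (a:ℝ) ≤ (b:ℝ) := by exact_mod_cast hab
  have hbNR : (b:ℝ) + 1 ≤ (N:ℝ) := by exact_mod_cast hbN'
  have hNR : ((N:ℕ):ℝ) = 2 * (n:ℝ) := by rw [hNdef]; push_cast; ring
  clear_value t₁ t₂ S E H
  refine ⟨t₁, t₂, ?_, ?_, ?_, ?_, ?_, ?_⟩
  · -- 0 < t₁
    rw [ht1]
    split_ifs with h
    · have ha2 : 2 ≤ a := by
        by_contra hc
        push_neg at hc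
        have : a = 1 := by omega
        rw [this] at h
        norm_num at h
        linarith
      have : (2:ℝ) ≤ (a:ℝ) := by exact_mod_cast ha2
      linarith
    · linarith
  · -- t₁ < t₂
    rw [ht1, ht2]
    split_ifs <;> linarith
  · -- t₂ < 2n
    rw [ht2, ← hNR]
    split_ifs with h
    · have : b + 1 < N := by
        rcases eq_or_lt_of_le (show b + 1 ≤ N by omega) with he | hlt
        · rw [he] at h; linarith
        · exact hlt
      have : ((b:ℝ) + 1) < (N:ℝ) := by exact_mod_cast this
      linarith
    · linarith
  · -- condition 1: k < t₁
    intro k hk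
    rw [ht1] at hk
    have key : 0 < E k := by
      split_ifs at hk with hcase
      · -- t₁ = a - 1, so k < a - 1
        have hka : (k:ℝ) + 1 < (a:ℝ) := by linarith
        have hH1 : 1 < H k := left_gt SC (by linarith : (k:ℝ) < (a:ℝ) - 1)
          (by linarith : (a:ℝ) - 1 < (a:ℝ)) hHam hHa
        have hkN : k ≤ N := by
          have : (k:ℝ) < (N:ℝ) := by linarith
          exact_mod_cast le_of_lt this
        exact sign1 k hkN hH1
      · -- t₁ = a - 1/2
        have hka : (k:ℝ) < (a:ℝ) := by linarith
        have hkaN : k < a := by exact_mod_cast hka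
        have hkN : k ≤ N := by omega
        rcases Nat.lt_or_ge (k+1) a with hlt | hge
        · have hkR : (k:ℝ) < (a:ℝ) - 1 := by
            have : ((k+1:ℕ):ℝ) < (a:ℝ) := by exact_mod_cast hlt
            push_cast at this
            linarith
          exact sign1 k hkN (left_gt SC hkR (by linarith) hHam hHa)
        · have hkeq : k = a - 1 := by omega
          rw [hkeq]
          exact lt_of_le_of_ne hEam (Ne.symm hcase)
    rw [hE] at key
    exact key
  · -- condition 2: t₁ < k < t₂
    intro k hk1 hk2
    rw [ht1] at hk1
    rw [ht2] at hk2
    have hak : a ≤ k := by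
      have : (a:ℝ) - 1 < (k:ℝ) := by split_ifs at hk1 <;> linarith
      have : (a:ℝ) < (k:ℝ) + 1 := by linarith
      have : a < k + 1 := by exact_mod_cast this
      omega
    have hkb : k ≤ b := by
      have : (k:ℝ) < (b:ℝ) + 1 := by split_ifs at hk2 <;> linarith
      have : k < b + 1 := by exact_mod_cast this
      omega
    have hkN : k ≤ N := by omega
    have key : E k < 0 := by
      rcases eq_or_lt_of_le hak with he | hlt1
      · rw [← he]; exact hEa
      · rcases eq_or_lt_of_le hkb with he | hlt2
        · rw [he]; exact hEb
        · have h1 : (a:ℝ) < (k:ℝ) := by exact_mod_cast hlt1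
          have h2 : (k:ℝ) < (b:ℝ) := by exact_mod_cast hlt2
          exact sign2 k hkN (mid_lt SC h1 h2 hHa.le hHb.le)
    rw [hE] at key
    exact key
  · -- condition 3: t₂ < k ≤ 2n
    intro k hk hkN
    rw [ht2] at hk
    have key : 0 < E k := by
      split_ifs at hk with hcase
      · have hbk : (b:ℝ) + 1 < (k:ℝ) := hk
        exact sign1 k hkN (right_gt SC (by linarith : (b:ℝ) < (b:ℝ) + 1) hbk hHb hHbp)
      · have hbk : (b:ℝ) < (k:ℝ) := by linarith
        have hbkN : b < k := by exact_mod_cast hbk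
        rcases Nat.lt_or_ge (b+1) k with hlt | hge
        · have hkR : (b:ℝ) + 1 < (k:ℝ) := by
            have : ((b+1:ℕ):ℝ) < (k:ℝ) := by exact_mod_cast hlt
            push_cast at this
            linarith
          exact sign1 k hkN (right_gt SC (by linarith) hkR hHb hHbp)
        · have hkeq : k = b + 1 := by omega
          rw [hkeq]
          exact lt_of_le_of_ne hEbp (Ne.symm hcase)
    rw [hE] at key
    exact key
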